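/- For any alternating spacetime game G, the map t ↦ t̂ sending each Bob node t to the event set t̂ = {(ι(m), σ(m, t)) | m ∈ N_A, m ⌣ t} is a bijection between the set of Bob's nodes of G and the set of left-hand sides of the enabling relations of the associated scenario F(G). -/

import Mathlib

open scoped Classical

/-! # Preamble: spacetime games and causal contextuality scenarios

Formalization of the structures of G. Fourny,
"Spacetime games subsume causal contextuality scenarios". -/

/-- The facets (maximal elements) of a family of sets. -/
def facetsOf {α : Type*} (A : Set (Set α)) : Set (Set α) :=
  {s | s ∈ A ∧ ∀ t ∈ A, s ⊆ t → s = t}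

/-- The support of a partial function (set of events). -/
def osupp {X O : Type*} (t : X → Option O) : Set X :=
  {y | t y ≠ none}

/-- A set of events is *consistent* if it assigns at most one outcome
to each measurement. -/
def ConsistentEvents {X O : Type*} (S : Set (X × O)) : Prop :=
  ∀ (x : X) (o o' : O), (x, o) ∈ S → (x, o') ∈ S → o = o'

/-- The local cover restriction of a cover `cov` to a set `s`: the facets of the
restriction to `s` of the simplicial complex whose facets are `cov`. -/
def localCover {α : Type*} (cov : Set (Set α)) (s : Set α) : Set (Set α) :=
  facetsOf {c | ∃ C ∈ cov, c = C ∩ s ∧ c ≠ ∅}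

/-- Raw data of a causal contextuality scenario with a cover:
measurements `X`, outcomes `O x ⊆ Outcome` for each measurement `x`,
an enabling relation `Enables` between sets of events (partial functions
from measurements to outcomes) and measurements, and a cover `Cover`
(the facets of a simplicial complex on `X`). -/
structure ScenarioData where
  X : Type*
  Outcome : Type*
  O : X → Set Outcome
  Enables : (X → Option Outcome) → X → Prop
  Cover : Set (Set X)

namespace ScenarioData

variable (Γ : ScenarioData)

/-- The set of measurements enabled by an event set `t`. -/
def enabled (t : Γ.X → Option Γ.Outcome) : Set Γ.X :=
  {x | Γ.Enables t x}

/-- Causal precedence: `a` precedes `b` if `a` is in the support of an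
event set enabling `b`. -/
def prec (a b : Γ.X) : Prop :=
  ∃ t, Γ.Enables t b ∧ t a ≠ none

/-- The causal bridge `τ(x)`: the unique event set enabling `x`
(junk value if none exists). -/
noncomputable def tau (x : Γ.X) : Γ.X → Option Γ.Outcome :=
  if h : ∃ t, Γ.Enables t x then h.choose else fun _ => none

/-- `τ̄(x)`: the transitive closure of the enabling conditions of `x`, i.e. the
set of all past events that must happen to enable measuring `x`. -/
noncomputable def tauBar (x : Γ.X) : Set (Γ.X × Γ.Outcome) :=
  {p | ∃ y, Relation.ReflTransGen Γ.prec y x ∧ Γ.tau y p.1 = some p.2}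

end ScenarioData

/-- A causal contextuality scenario with no cycles, unique causal bridges,
a causally secured cover, consistent enabling event sets, and no unused
measurements. These are the objects of the category `Scenario`. -/
structure IsCCS (Γ : ScenarioData) : Prop where
  /-- Left-hand sides of enabling relations assign admissible outcomes. -/
  event_lhs : ∀ t x, Γ.Enables t x → ∀ y o, t y = some o → o ∈ Γ.O y
  /-- Unique causal bridges: each measurement has exactly one enabling event set. -/
  unique_bridges : ∀ x, ∃! t, Γ.Enables t x
  /-- No cycles in the causal precedence relation. -/
  acyclic : ∀ x, ¬ Relation.TransGen Γ.prec x x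
  /-- The cover is the set of facets of a simplicial complex (an antichain). -/
  cover_antichain : ∀ C ∈ Γ.Cover, ∀ D ∈ Γ.Cover, C ⊆ D → C = D
  /-- Every measurement appears in some facet (no unused measurements). -/
  cover_covers : ∀ x, ∃ C ∈ Γ.Cover, x ∈ C
  /-- The transitive enabling conditions of each measurement are consistent. -/
  no_unused : ∀ x, ConsistentEvents (Γ.tauBar x)
  /-- Causally secured (i): facet membership propagates to enabling measurements. -/
  secured_support : ∀ C ∈ Γ.Cover, ∀ x ∈ C, osupp (Γ.tau x) ⊆ C
  /-- Causally secured (ii): measurements with inconsistent enabling conditions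
  never share a facet. -/
  secured_inconsistent : ∀ x y, ¬ ConsistentEvents (Γ.tauBar x ∪ Γ.tauBar y) →
    ∀ C ∈ Γ.Cover, ¬ (x ∈ C ∧ y ∈ C)
  /-- Causally secured (iii): the cover is maximal among covers with the same
  local cover restrictions satisfying (i) and (ii). -/
  secured_max : ∀ cov' : Set (Set Γ.X),
    (∀ C ∈ cov', ∀ D ∈ cov', C ⊆ D → C = D) →
    (∀ C ∈ cov', ∀ x ∈ C, osupp (Γ.tau x) ⊆ C) →
    (∀ x y, ¬ ConsistentEvents (Γ.tauBar x ∪ Γ.tauBar y) →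
      ∀ C ∈ cov', ¬ (x ∈ C ∧ y ∈ C)) →
    (∀ t x, Γ.Enables t x →
      localCover cov' (Γ.enabled t) = localCover Γ.Cover (Γ.enabled t)) →
    ∀ C ∈ cov', ∃ D ∈ Γ.Cover, C ⊆ D

/-- A scenario morphism `μ : Γ' → Γ` with components `π : Γ.X → Γ'.X`
(entailing a simplicial map from the cover of `Γ` to that of `Γ'`) and
outcome translations `α x : O'_{π x} → O_x`, subject to the three
structural constraints. -/
structure IsScenarioHom (Γ' Γ : ScenarioData) (π : Γ.X → Γ'.X)
    (α : Γ.X → Γ'.Outcome → Γ.Outcome) : Prop where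
  /-- `α x` maps the outcomes of `π x` to outcomes of `x`. -/
  alpha_mapsTo : ∀ x : Γ.X, ∀ o ∈ Γ'.O (π x), α x o ∈ Γ.O x
  /-- `π` entails a simplicial map from the cover of `Γ` to the cover of `Γ'`. -/
  simplicial : ∀ C ∈ Γ.Cover, ∃ C' ∈ Γ'.Cover, π '' C ⊆ C'
  /-- (1) `π` preserves causal bridges. -/
  bridge_pres : ∀ x y : Γ.X, Γ'.tau (π x) = Γ'.tau (π y) → Γ.tau x = Γ.tau y
  /-- (2) measurement enablement is not precluded by `π`. -/
  support_surj : ∀ (x : Γ.X) (y' : Γ'.X), Γ'.tau (π x) y' ≠ none → ∃ y, π y = y'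
  /-- (3) outcomes on causal bridges are mapped consistently. -/
  outcome_consistent : ∀ (x y : Γ.X) (o' : Γ'.Outcome),
    Γ'.tau (π x) (π y) = some o' → Γ.tau x y = some (α y o')

/-- Identity component `π` of the identity scenario morphism. -/
def idπ (Γ : ScenarioData) : Γ.X → Γ.X := id

/-- Identity component `α` of the identity scenario morphism. -/
def idα (Γ : ScenarioData) : Γ.X → Γ.Outcome → Γ.Outcome := fun _ o => o

/-- The `π` component of the composition `μ₁ ∘ μ₂` of scenario morphisms
`μ₁ : Γ' → Γ` and `μ₂ : Γ'' → Γ'`. -/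
def compπ {Γ Γ' Γ'' : ScenarioData} (π₁ : Γ.X → Γ'.X) (π₂ : Γ'.X → Γ''.X) :
    Γ.X → Γ''.X :=
  fun x => π₂ (π₁ x)

/-- The `α` component of the composition `μ₁ ∘ μ₂` of scenario morphisms. -/
def compα {Γ Γ' Γ'' : ScenarioData} (π₁ : Γ.X → Γ'.X)
    (α₁ : Γ.X → Γ'.Outcome → Γ.Outcome) (α₂ : Γ'.X → Γ''.Outcome → Γ'.Outcome) :
    Γ.X → Γ''.Outcome → Γ.Outcome :=
  fun x o => α₁ x (α₂ (π₁ x) o)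

/-- Two scenarios are isomorphic if there are mutually inverse scenario
morphisms between them. -/
def ScenIso (A B : ScenarioData) : Prop :=
  ∃ (π : B.X → A.X) (α : B.X → A.Outcome → B.Outcome)
    (π₂ : A.X → B.X) (α₂ : A.X → B.Outcome → A.Outcome),
    IsScenarioHom A B π α ∧ IsScenarioHom B A π₂ α₂ ∧
    (∀ x, π (π₂ x) = x) ∧ (∀ y, π₂ (π y) = y) ∧
    (∀ x o, α₂ x (α (π₂ x) o) = o) ∧ (∀ y o, α y (α₂ (π y) o) = o)

/-- A spacetime game: a directed acyclic graph of decision nodes, labelled with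
players and actions, with an information-set partition (represented by the
quotient map `ι` onto the type `Info` of information sets), and two
distinguished players Bob (the observer) and Alfred (nature).
The set of outcomes `Z` is the set of complete histories. -/
structure SpacetimeGame where
  Node : Type*
  Info : Type*
  Player : Type*
  Action : Type*
  /-- the information set of a node -/
  ι : Node → Info
  /-- the player of an information set -/
  ρ : Info → Player
  /-- the available actions of an information set -/
  χ : Info → Set Action
  /-- the edge relation `R` -/
  edge : Node → Node → Prop
  /-- the action labelling the edge `(n, m)` -/
  σ : Node → Node → Action
  bob : Player
  alfred : Player

namespace SpacetimeGame

variable (G : SpacetimeGame)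

/-- A node is played by Bob. -/
def isBob (n : G.Node) : Prop := G.ρ (G.ι n) = G.bob

/-- A node is played by Alfred. -/
def isAlfred (n : G.Node) : Prop := G.ρ (G.ι n) = G.alfred

/-- The nodes played by Alfred. -/
def NodeA := {n : G.Node // G.isAlfred n}

/-- The (nonempty) information sets played by Alfred. -/
def InfoA := {i : G.Info // ∃ n, G.ι n = i ∧ G.ρ i = G.alfred}

/-- The parent of a node (junk value at roots; unique parent for
Alfred nodes in alternating games by BA1). -/
noncomputable def parent (n : G.Node) : G.Node :=
  if h : ∃ t, G.edge t n then h.choose else n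

/-- A representative node of an Alfred information set. -/
noncomputable def repA (x : G.InfoA) : G.NodeA :=
  ⟨x.2.choose, show G.ρ (G.ι x.2.choose) = G.alfred by
    rw [x.2.choose_spec.1]; exact x.2.choose_spec.2⟩

/-- The causal bridge `t̂` of a node `t`: the set of events consisting of the
predecessors' information sets together with the labels on the incoming edges. -/
noncomputable def tHat (t : G.Node) : G.InfoA → Option G.Action :=
  fun y => if h : ∃ m, G.ι m = y.1 ∧ G.edge m t then some (G.σ h.choose t) else none

/-- A complete history: a partial assignment of actions to information sets
such that an information set is assigned an action exactly when it is
activated, and assigned actions are available. -/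
def CompleteHistory (z : G.Info → Option G.Action) : Prop :=
  (∀ i a, z i = some a → a ∈ G.χ i) ∧
  ∀ i, (z i ≠ none ↔ ∃ n, G.ι n = i ∧ ∀ m, G.edge m n → z (G.ι m) = some (G.σ m n))

/-- The set of outcomes `Z` of a (valid) game: the set of complete histories. -/
def Z : Set (G.Info → Option G.Action) := {z | G.CompleteHistory z}

/-- The natural cover of a game: the facets of the projections to Alfred's
information sets of the supports of the complete histories. -/
def naturalCover : Set (Set G.InfoA) :=
  facetsOf {S | ∃ z, G.CompleteHistory z ∧ S = {x : G.InfoA | z x.1 ≠ none}}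

end SpacetimeGame

/-- An alternating spacetime game: a valid spacetime game (with no unused
information sets and no unused actions) on two players Bob and Alfred
satisfying BIPARTITE, EVEN, BOB-S, BOB-A, BA1, BA2, AB1 and AB2.
These are the objects of the category `Game`. -/
structure IsAlternating (G : SpacetimeGame) : Prop where
  /-- 2-PLAYERS: the two players are distinct -/
  players_ne : G.bob ≠ G.alfred
  /-- 2-PLAYERS: every information set is played by Bob or by Alfred -/
  two_players : ∀ i : G.Info, G.ρ i = G.bob ∨ G.ρ i = G.alfred
  /-- the graph of decision nodes is finite -/
  node_finite : Finite G.Node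
  /-- the graph of decision nodes is acyclic -/
  acyclic : ∀ n : G.Node, ¬ Relation.TransGen G.edge n n
  /-- edge labels are available actions: `σ(n,m) ∈ χ(n)` -/
  sigma_mem : ∀ n m : G.Node, G.edge n m → G.σ n m ∈ G.χ (G.ι n)
  /-- no never-activated information set -/
  no_unused_info : ∀ i : G.Info, ∃ z, G.CompleteHistory z ∧ z i ≠ none
  /-- no unused action -/
  no_unused_action : ∀ a : G.Action, ∃ i, a ∈ G.χ i
  /-- BIPARTITE -/
  bipartite : ∀ n m : G.Node, G.edge n m → G.ρ (G.ι n) ≠ G.ρ (G.ι m)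
  /-- EVEN: all root nodes are played by Bob -/
  even_roots : ∀ n : G.Node, (∀ m, ¬ G.edge m n) → G.isBob n
  /-- EVEN: all leaf nodes are played by Alfred -/
  even_leaves : ∀ n : G.Node, (∀ m, ¬ G.edge n m) → G.isAlfred n
  /-- BOB-S: Bob's information sets are singletons -/
  bob_singleton : ∀ n m : G.Node, G.isBob n → G.ι n = G.ι m → n = m
  /-- BOB-A: at any Bob node, every available action is used on some edge -/
  bob_actions : ∀ t : G.Node, G.isBob t → ∀ a ∈ G.χ (G.ι t), ∃ n, G.edge t n ∧ G.σ t n = a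
  /-- BA1: every Alfred node has exactly one parent -/
  ba1 : ∀ n : G.Node, G.isAlfred n → ∃! t, G.edge t n
  /-- BA2: children of a Bob node reached with the same label lie in
  different information sets -/
  ba2 : ∀ t n m : G.Node, G.isBob t → G.edge t n → G.edge t m →
    G.σ t n = G.σ t m → G.ι n = G.ι m → n = m
  /-- AB1: nodes in the same Alfred information set have the same successors
  with the same labels -/
  ab1 : ∀ n m : G.Node, G.isAlfred n → G.ι n = G.ι m →
    ∀ u, (G.edge n u ↔ G.edge m u) ∧ (G.edge n u → G.σ n u = G.σ m u)
  /-- AB2: no two distinct Bob nodes have the same causal bridge -/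
  ab2 : ∀ t u : G.Node, G.isBob t → G.isBob u → (∀ n, G.edge n t ↔ G.edge n u) →
    (∀ n, G.edge n t → G.σ n t = G.σ n u) → t = u

/-- A game morphism `γ : G' → G` with components `ν : N_A → N'_A` on
Alfred's nodes and action translations `β` (indexed by Alfred's information
sets via constancy on them), subject to the five structural constraints. -/
structure IsGameHom (G' G : SpacetimeGame) (ν : G.NodeA → G'.NodeA)
    (β : G.NodeA → G'.Action → G.Action) : Prop where
  /-- `β` is indexed by Alfred's information sets. -/
  beta_const : ∀ n m : G.NodeA, G.ι n.1 = G.ι m.1 → β n = β m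
  /-- `β_x` maps `χ'(ν'(x))` into `χ(x)`. -/
  beta_mapsTo : ∀ n : G.NodeA, ∀ a ∈ G'.χ (G'.ι (ν n).1), β n a ∈ G.χ (G.ι n.1)
  /-- (1) `ν` preserves information sets. -/
  info_pres : ∀ n m : G.NodeA, G.ι n.1 = G.ι m.1 → G'.ι (ν n).1 = G'.ι (ν m).1
  /-- (2) `ν` preserves parents. -/
  parent_pres : ∀ n m : G.NodeA,
    G'.parent (ν n).1 = G'.parent (ν m).1 → G.parent n.1 = G.parent m.1
  /-- (3) universe labels (measurement outcomes) are mapped consistently. -/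
  outcome_consistent : ∀ n m : G.NodeA, G'.edge (ν n).1 (G'.parent (ν m).1) →
    G.edge n.1 (G.parent m.1) ∧
      β n (G'.σ (ν n).1 (G'.parent (ν m).1)) = G.σ n.1 (G.parent m.1)
  /-- (4) `ν` restricts to a simplicial map on the local contexts at each
  node of `D_ν`, mapping individual nodes consistently. -/
  simplicial : ∀ m n : G.NodeA, G.edge (G.parent m.1) n.1 →
    G'.edge (G'.parent (ν m).1) (ν n).1 ∧
      ∀ k : G.NodeA, G.edge (G.parent m.1) k.1 →
        G.σ (G.parent m.1) n.1 = G.σ (G.parent m.1) k.1 →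
        G'.σ (G'.parent (ν m).1) (ν n).1 = G'.σ (G'.parent (ν m).1) (ν k).1
  /-- (5) all Alfred information sets feeding a node of `D_ν` are in the
  image of `ν`. -/
  alfred_surj : ∀ (n' : G'.NodeA) (m : G.NodeA), G'.edge n'.1 (G'.parent (ν m).1) →
    ∃ k : G.NodeA, G'.ι (ν k).1 = G'.ι n'.1

/-- Identity component `ν` of the identity game morphism. -/
def idν (G : SpacetimeGame) : G.NodeA → G.NodeA := id

/-- Identity component `β` of the identity game morphism. -/
def idβ (G : SpacetimeGame) : G.NodeA → G.Action → G.Action := fun _ a => a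

/-- The `ν` component of the composition `γ₁ ∘ γ₂` of game morphisms
`γ₁ : G' → G` and `γ₂ : G'' → G'`. -/
def compν {G G' G'' : SpacetimeGame} (ν₁ : G.NodeA → G'.NodeA)
    (ν₂ : G'.NodeA → G''.NodeA) : G.NodeA → G''.NodeA :=
  fun n => ν₂ (ν₁ n)

/-- The `β` component of the composition `γ₁ ∘ γ₂` of game morphisms. -/
def compβ {G G' G'' : SpacetimeGame} (ν₁ : G.NodeA → G'.NodeA)
    (β₁ : G.NodeA → G'.Action → G.Action) (β₂ : G'.NodeA → G''.Action → G'.Action) :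
    G.NodeA → G''.Action → G.Action :=
  fun n a => β₁ n (β₂ (ν₁ n) a)

/-- The scenario associated with a spacetime game (the action of the
functor `F` on objects): measurements are Alfred's information sets,
outcomes their available actions, each measurement is enabled by the causal
bridges of the parents of its nodes, and the cover is the natural cover. -/
noncomputable def Fobj (G : SpacetimeGame) : ScenarioData where
  X := G.InfoA
  Outcome := G.Action
  O := fun x => G.χ x.1
  Enables := fun t x => ∃ n, G.ι n = x.1 ∧
    ((∃ t₀, G.edge t₀ n ∧ t = G.tHat t₀) ∨ ((∀ m, ¬ G.edge m n) ∧ t = fun _ => none))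
  Cover := G.naturalCover

/-- The `π` component of the action of the functor `F` on a game morphism
with node component `ν`: `ν` viewed as acting on Alfred's information sets. -/
noncomputable def Fhomπ {G G' : SpacetimeGame} (ν : G.NodeA → G'.NodeA) :
    G.InfoA → G'.InfoA :=
  fun x => ⟨G'.ι (ν (G.repA x)).1, ⟨(ν (G.repA x)).1, rfl, (ν (G.repA x)).2⟩⟩

/-- The `α` component of the action of the functor `F` on a game morphism
with action component `β`: `β` viewed as indexed by Alfred's information sets. -/
noncomputable def Fhomα {G G' : SpacetimeGame} (β : G.NodeA → G'.Action → G.Action) :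
    G.InfoA → G'.Action → G.Action :=
  fun x => β (G.repA x)

/-- The spacetime game associated with a scenario: Bob's nodes are the
left-hand sides of enabling relations, Alfred's nodes are triples
(enabling event set, measurement, context), Bob's actions are the local
contexts, Alfred's actions are the outcomes. -/
def Gobj (Γ : ScenarioData) : SpacetimeGame where
  Node := ({t : Γ.X → Option Γ.Outcome // ∃ x, Γ.Enables t x}) ⊕
    ({p : (Γ.X → Option Γ.Outcome) × Γ.X × Set Γ.X //
        Γ.Enables p.1 p.2.1 ∧ p.2.2 ∈ localCover Γ.Cover (Γ.enabled p.1) ∧ p.2.1 ∈ p.2.2})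
  Info := ({t : Γ.X → Option Γ.Outcome // ∃ x, Γ.Enables t x}) ⊕ Γ.X
  Player := Bool
  Action := Set Γ.X ⊕ Γ.Outcome
  ι := fun n => match n with
    | Sum.inl t => Sum.inl t
    | Sum.inr p => Sum.inr p.1.2.1
  ρ := fun i => match i with
    | Sum.inl _ => true
    | Sum.inr _ => false
  χ := fun i => match i with
    | Sum.inl t => Sum.inl '' localCover Γ.Cover (Γ.enabled t.1)
    | Sum.inr x => Sum.inr '' Γ.O x
  edge := fun n m => match n, m with
    | Sum.inl t, Sum.inr p => p.1.1 = t.1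
    | Sum.inr p, Sum.inl t => t.1 p.1.2.1 ≠ none
    | _, _ => False
  σ := fun n m => match n, m with
    | Sum.inl _, Sum.inr p => Sum.inl p.1.2.2
    | Sum.inr p, Sum.inl t =>
      match t.1 p.1.2.1 with
      | some o => Sum.inr o
      | none => Sum.inl (∅ : Set Γ.X)
    | _, _ => Sum.inl (∅ : Set Γ.X)
  bob := true
  alfred := false

/-- Auxiliary: if two Bob nodes have the same causal bridge, then every
parent of the first is a parent of the second with the same edge label. -/
lemma tHat_eq_aux (G : SpacetimeGame) (hG : IsAlternating G) (t u : G.Node)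
    (ht : G.isBob t) (h : G.tHat t = G.tHat u) (n : G.Node) (hnt : G.edge n t) :
    G.edge n u ∧ G.σ n t = G.σ n u := by
  have hnA : G.isAlfred n := by
    rcases hG.two_players (G.ι n) with hb | ha
    · exact absurd (ht.trans hb.symm) (hG.bipartite n t hnt).symm
    · exact ha
  set y : G.InfoA := ⟨G.ι n, ⟨n, rfl, hnA⟩⟩ with hy
  have h1 : ∃ m, G.ι m = y.1 ∧ G.edge m t := ⟨n, rfl, hnt⟩
  have hcf := congrFun h y
  simp only [SpacetimeGame.tHat] at hcf
  rw [dif_pos h1] at hcf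
  have h2 : ∃ m, G.ι m = y.1 ∧ G.edge m u := by
    by_contra h2
    rw [dif_neg h2] at hcf
    exact Option.some_ne_none _ hcf
  rw [dif_pos h2] at hcf
  have hσ : G.σ h1.choose t = G.σ h2.choose u := Option.some.injEq .. ▸ hcf
  have e1 := hG.ab1 n h1.choose hnA h1.choose_spec.1.symm
  have e2 := hG.ab1 n h2.choose hnA h2.choose_spec.1.symm
  have hnu : G.edge n u := (e2 u).1.mpr h2.choose_spec.2
  refine ⟨hnu, ?_⟩
  rw [(e1 t).2 hnt, hσ, ← (e2 u).2 hnu]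

/-- For any alternating spacetime game `G`, the map `t ↦ t̂`
sending each Bob node to its causal bridge is a bijection between Bob's nodes
of `G` and the left-hand sides of the enabling relations of the associated
scenario `F(G)`. -/
theorem tHat_bijection (G : SpacetimeGame) (hG : IsAlternating G) :
    Set.BijOn G.tHat {t : G.Node | G.isBob t}
      {t : (Fobj G).X → Option (Fobj G).Outcome | ∃ x, (Fobj G).Enables t x} := by
  refine ⟨?_, ?_, ?_⟩
  · -- MapsTo
    intro t ht
    obtain ⟨n, hn⟩ : ∃ n, G.edge t n := by
      by_contra h
      push_neg at h
      exact hG.players_ne (ht.symm.trans (hG.even_leaves t h))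
    have hnA : G.isAlfred n := by
      rcases hG.two_players (G.ι n) with hb | ha
      · exact absurd (ht.trans hb.symm) (hG.bipartite t n hn)
      · exact ha
    exact ⟨⟨G.ι n, ⟨n, rfl, hnA⟩⟩, n, rfl, Or.inl ⟨t, hn, rfl⟩⟩
  · -- InjOn
    intro t ht u hu h
    refine hG.ab2 t u ht hu (fun n => ⟨fun hn => (tHat_eq_aux G hG t u ht h n hn).1,
      fun hn => (tHat_eq_aux G hG u t hu h.symm n hn).1⟩)
      (fun n hn => (tHat_eq_aux G hG t u ht h n hn).2)
  · -- SurjOn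
    intro t ht
    obtain ⟨x, n, hni, h⟩ := ht
    have hxA : G.ρ x.1 = G.alfred := x.2.choose_spec.2
    rcases h with ⟨t₀, het, rfl⟩ | ⟨hroot, rfl⟩
    · have htB : G.isBob t₀ := by
        rcases hG.two_players (G.ι t₀) with hb | ha
        · exact hb
        · exact absurd (ha.trans (by rw [← hni] at hxA; exact hxA.symm))
            (hG.bipartite t₀ n het)
      exact ⟨t₀, htB, rfl⟩
    · exfalso
      have := hG.even_roots n hroot
      rw [SpacetimeGame.isBob, hni, hxA] at this
      exact hG.players_ne this.symm
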